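/- Let w be a multilinear commutator word, G a profinite group, and N an open normal subgroup of G. Then the w*-residual of N in G is an open subgroup of the verbal subgroup w(G), i.e. it has finite index in w(G). -/

import Mathlib

/-- Multilinear commutator words: the word `x` in one variable is a multilinear commutator
word, and if `u` and `v` are multilinear commutator words (on disjoint sets of variables,
here enforced by using `m + n` fresh variables), then `[u,v]` is one. -/
inductive MultilinearCommutatorWord : ℕ → Type
  | var : MultilinearCommutatorWord 1
  | comm : ∀ {m n : ℕ}, MultilinearCommutatorWord m → MultilinearCommutatorWord n →
      MultilinearCommutatorWord (m + n)

namespace MultilinearCommutatorWord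

open scoped commutatorElement

/-- Evaluation of a multilinear commutator word on a tuple of group elements. -/
def eval {G : Type*} [Group G] : ∀ {n : ℕ}, MultilinearCommutatorWord n → (Fin n → G) → G
  | _, var, f => f 0
  | _, comm u v, f =>
      ⁅eval u (fun i => f (Fin.castAdd _ i)), eval v (fun j => f (Fin.natAdd _ j))⁆

end MultilinearCommutatorWord


/-- The marginal subgroup `w*(G)` of a group `G` corresponding to the word `w`, as a set:
all `x` such that inserting `x` on either side of any entry does not change the value of `w`. -/
def marginal {G : Type*} [Group G] {n : ℕ} (w : MultilinearCommutatorWord n) : Set G :=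
  {x : G | ∀ (g : Fin n → G) (i : Fin n),
    w.eval (Function.update g i (x * g i)) = w.eval g ∧
    w.eval (Function.update g i (g i * x)) = w.eval g}

namespace MCWAux

open Subgroup

open scoped commutatorElement

/-- The set of `w`-values. -/
def wValues {n : ℕ} (w : MultilinearCommutatorWord n) (G : Type*) [Group G] : Set G :=
  {g : G | ∃ f : Fin n → G, w.eval f = g}

/-- The verbal subgroup. -/
def wVerbal {n : ℕ} (w : MultilinearCommutatorWord n) (G : Type*) [Group G] : Subgroup G :=
  Subgroup.closure (wValues w G)

theorem eval_map {G H : Type*} [Group G] [Group H] (φ : G →* H) :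
    ∀ {n : ℕ} (w : MultilinearCommutatorWord n) (f : Fin n → G),
      φ (w.eval f) = w.eval (φ ∘ f)
  | _, .var, _ => rfl
  | _, .comm u v, f => by
    simp only [MultilinearCommutatorWord.eval, map_commutatorElement,
      eval_map φ u, eval_map φ v]
    rfl

variable {G : Type*} [Group G] {n : ℕ}

theorem wValues_conj (w : MultilinearCommutatorWord n) (c x : G) (hx : x ∈ wValues w G) :
    c * x * c⁻¹ ∈ wValues w G := by
  obtain ⟨f, rfl⟩ := hx
  refine ⟨fun i => c * f i * c⁻¹, ?_⟩
  have h := eval_map (MulAut.conj c).toMonoidHom w f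
  exact h.symm

theorem wVerbal_normal (w : MultilinearCommutatorWord n) : (wVerbal w G).Normal := by
  constructor
  intro x hx g
  induction hx using Subgroup.closure_induction with
  | mem y hy => exact subset_closure (wValues_conj w g y hy)
  | one => simpa using one_mem _
  | mul y z _ _ hy hz =>
      have : g * (y * z) * g⁻¹ = (g * y * g⁻¹) * (g * z * g⁻¹) := by group
      rw [this]; exact mul_mem hy hz
  | inv y _ hy =>
      have : g * y⁻¹ * g⁻¹ = (g * y * g⁻¹)⁻¹ := by group
      rw [this]; exact inv_mem hy

theorem wValues_map_surj {H : Type*} [Group H] {φ : G →* H} (hφ : Function.Surjective φ)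
    (w : MultilinearCommutatorWord n) : φ '' wValues w G = wValues w H := by
  ext y
  constructor
  · rintro ⟨x, ⟨f, rfl⟩, rfl⟩
    exact ⟨φ ∘ f, (eval_map φ w f).symm⟩
  · rintro ⟨f, rfl⟩
    choose g hg using fun i => hφ (f i)
    exact ⟨w.eval g, ⟨g, rfl⟩, by rw [eval_map φ w g]; congr 1; exact funext hg⟩

theorem wVerbal_map_surj {H : Type*} [Group H] {φ : G →* H} (hφ : Function.Surjective φ)
    (w : MultilinearCommutatorWord n) : (wVerbal w G).map φ = wVerbal w H := by
  rw [wVerbal, MonoidHom.map_closure, wValues_map_surj hφ, wVerbal]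

theorem wVerbal_map_le {H : Type*} [Group H] (φ : G →* H)
    (w : MultilinearCommutatorWord n) : (wVerbal w G).map φ ≤ wVerbal w H := by
  rw [wVerbal, MonoidHom.map_closure]
  refine Subgroup.closure_mono ?_
  rintro y ⟨x, ⟨f, rfl⟩, rfl⟩
  exact ⟨φ ∘ f, (eval_map φ w f).symm⟩

theorem commute_of_mem_centralizer {s : Set G} {c : G} (hc : c ∈ Subgroup.centralizer s)
    {x : G} (hx : x ∈ Subgroup.closure s) : x * c = c * x := by
  induction hx using Subgroup.closure_induction with
  | mem y hy => exact hc y hy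
  | one => simp
  | mul y z _ _ hy hz => rw [mul_assoc, hz, ← mul_assoc, hy, mul_assoc]
  | inv y _ hy =>
      have := congrArg (fun t => y⁻¹ * t * y⁻¹) hy
      simpa [mul_assoc] using this.symm

theorem centralizer_normal_of {s : Set G} (hs : ∀ c x, x ∈ s → c * x * c⁻¹ ∈ s) :
    (Subgroup.centralizer s).Normal := by
  constructor
  intro x hx g
  rw [Subgroup.mem_centralizer_iff] at hx ⊢
  intro y hy
  have h1 : g⁻¹ * y * g ∈ s := by
    have := hs g⁻¹ y hy; simpa using this
  have h2 := hx _ h1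
  have : y * (g * x * g⁻¹) = g * ((g⁻¹ * y * g) * x) * g⁻¹ := by group
  rw [this, h2]; group

/-! ### Fin.addCases plumbing -/

section FinStuff

variable {m' n' : ℕ}

theorem eval_comm_addCases (u : MultilinearCommutatorWord m') (v : MultilinearCommutatorWord n')
    (g : Fin m' → G) (h : Fin n' → G) :
    (u.comm v).eval (Fin.addCases (motive := fun _ => G) g h) = ⁅u.eval g, v.eval h⁆ := by
  simp only [MultilinearCommutatorWord.eval]
  congr 1
  · congr 1; funext i; simp
  · congr 1; funext j; simp

theorem update_addCases_left (g : Fin m' → G) (h : Fin n' → G) (i : Fin m') (x : G) :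
    Function.update (Fin.addCases (motive := fun _ => G) g h) (Fin.castAdd n' i) x
      = Fin.addCases (motive := fun _ => G) (Function.update g i x) h := by
  funext j
  refine Fin.addCases (motive := fun j => Function.update
      (Fin.addCases (motive := fun _ => G) g h) (Fin.castAdd n' i) x j
      = Fin.addCases (motive := fun _ => G) (Function.update g i x) h j) (fun j' => ?_) (fun j' => ?_) j
  all_goals beta_reduce
  · by_cases hji : j' = i
    · subst hji; simp
    · have hne : (Fin.castAdd n' j') ≠ (Fin.castAdd n' i) := by
        simp [Fin.ext_iff]; exact fun hc => hji (Fin.ext hc)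
      rw [Function.update_of_ne hne]
      simp [Function.update_of_ne hji]
  · have hne : (Fin.natAdd m' j') ≠ (Fin.castAdd n' i) := by
      simp [Fin.ext_iff]; omega
    rw [Function.update_of_ne hne]
    simp

theorem update_addCases_right (g : Fin m' → G) (h : Fin n' → G) (j : Fin n') (x : G) :
    Function.update (Fin.addCases (motive := fun _ => G) g h) (Fin.natAdd m' j) x
      = Fin.addCases (motive := fun _ => G) g (Function.update h j x) := by
  funext k
  refine Fin.addCases (motive := fun k => Function.update
      (Fin.addCases (motive := fun _ => G) g h) (Fin.natAdd m' j) x k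
      = Fin.addCases (motive := fun _ => G) g (Function.update h j x) k) (fun k' => ?_) (fun k' => ?_) k
  all_goals beta_reduce
  · have hne : (Fin.castAdd n' k') ≠ (Fin.natAdd m' j) := by
      simp [Fin.ext_iff]; omega
    rw [Function.update_of_ne hne]
    simp
  · by_cases hkj : k' = j
    · subst hkj; simp
    · have hne : (Fin.natAdd m' k') ≠ (Fin.natAdd m' j) := by
        simp [Fin.ext_iff]; exact fun hc => hkj (Fin.ext hc)
      rw [Function.update_of_ne hne]
      simp [Function.update_of_ne hkj]

end FinStuff

/-! ### marginal bridging -/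

theorem mk_mem_marginal_iff {K : Subgroup G} [K.Normal] (w : MultilinearCommutatorWord n) (s : G) :
    ((QuotientGroup.mk s : G ⧸ K) ∈ marginal w) ↔
      ∀ (g : Fin n → G) (i : Fin n),
        (w.eval (Function.update g i (s * g i)))⁻¹ * w.eval g ∈ K ∧
        (w.eval (Function.update g i (g i * s)))⁻¹ * w.eval g ∈ K := by
  have hmk : ∀ (h : Fin n → G), MultilinearCommutatorWord.eval w
      (fun j => (QuotientGroup.mk (h j) : G ⧸ K)) = QuotientGroup.mk (w.eval h) := by
    intro h
    exact (eval_map (QuotientGroup.mk' K) w h).symm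
  constructor
  · intro hs g i
    have h := hs (fun j => QuotientGroup.mk (g j)) i
    constructor
    · have h1 := h.1
      rw [show (QuotientGroup.mk s * QuotientGroup.mk (g i) : G ⧸ K)
            = QuotientGroup.mk (s * g i) from rfl] at h1
      rw [show Function.update (fun j => (QuotientGroup.mk (g j) : G ⧸ K)) i
            (QuotientGroup.mk (s * g i))
          = fun j => QuotientGroup.mk (Function.update g i (s * g i) j) from ?_] at h1
      · rw [hmk, hmk] at h1
        exact (QuotientGroup.eq).mp h1
      · funext j
        by_cases hji : j = i
        · subst hji; simp
        · simp [Function.update_of_ne hji]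
    · have h1 := h.2
      rw [show ((QuotientGroup.mk (g i) : G ⧸ K) * QuotientGroup.mk s)
            = QuotientGroup.mk (g i * s) from rfl] at h1
      rw [show Function.update (fun j => (QuotientGroup.mk (g j) : G ⧸ K)) i
            (QuotientGroup.mk (g i * s))
          = fun j => QuotientGroup.mk (Function.update g i (g i * s) j) from ?_] at h1
      · rw [hmk, hmk] at h1
        exact (QuotientGroup.eq).mp h1
      · funext j
        by_cases hji : j = i
        · subst hji; simp
        · simp [Function.update_of_ne hji]
  · intro hd gbar i
    set g : Fin n → G := fun j => (gbar j).out with hg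
    have hgq : ∀ j, (QuotientGroup.mk (g j) : G ⧸ K) = gbar j := fun j => QuotientGroup.out_eq' _
    have hgbar : gbar = fun j => (QuotientGroup.mk (g j) : G ⧸ K) := by
      funext j; rw [hgq]
    constructor
    · rw [hgbar]
      rw [show ((QuotientGroup.mk s : G ⧸ K) * QuotientGroup.mk (g i))
            = QuotientGroup.mk (s * g i) from rfl]
      rw [show Function.update (fun j => (QuotientGroup.mk (g j) : G ⧸ K)) i
            (QuotientGroup.mk (s * g i))
          = fun j => QuotientGroup.mk (Function.update g i (s * g i) j) from ?_]
      · rw [hmk, hmk]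
        exact (QuotientGroup.eq).mpr (hd g i).1
      · funext j
        by_cases hji : j = i
        · subst hji; simp
        · simp [Function.update_of_ne hji]
    · rw [hgbar]
      rw [show ((QuotientGroup.mk (g i) : G ⧸ K) * QuotientGroup.mk s)
            = QuotientGroup.mk (g i * s) from rfl]
      rw [show Function.update (fun j => (QuotientGroup.mk (g j) : G ⧸ K)) i
            (QuotientGroup.mk (g i * s))
          = fun j => QuotientGroup.mk (Function.update g i (g i * s) j) from ?_]
      · rw [hmk, hmk]
        exact (QuotientGroup.eq).mpr (hd g i).2
      · funext j
        by_cases hji : j = i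
        · subst hji; simp
        · simp [Function.update_of_ne hji]

/-! ### finiteness helpers -/

theorem finite_map_subgroup {Q R : Type*} [Group Q] [Group R] (f : Q →* R) (K : Subgroup Q)
    (hK : Finite K) : Finite ↥(K.map f) := by
  have h : ((K.map f : Subgroup R) : Set R).Finite := by
    rw [Subgroup.coe_map]
    exact (Set.toFinite (K : Set Q)).image _
  exact h.to_subtype

theorem finite_quot_subgroupOf {Q R : Type*} [Group Q] [Group R] (π : Q →* R) (H : Subgroup Q)
    (h1 : Finite ↥(H.map π)) : Finite (↥H ⧸ ((π.ker).subgroupOf H)) := by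
  have hker : (π.ker).subgroupOf H = (π.comp H.subtype).ker := by
    ext x
    simp [Subgroup.mem_subgroupOf, MonoidHom.mem_ker]
  rw [hker]
  have h2 : Finite ↥(π.comp H.subtype).range := by
    rw [MonoidHom.range_comp, H.range_subtype]
    exact h1
  exact Finite.of_equiv _ (QuotientGroup.quotientKerEquivRange (π.comp H.subtype)).symm.toEquiv

theorem finite_of_map_of_ker {Q R : Type*} [Group Q] [Group R] (π : Q →* R) (H : Subgroup Q)
    (h1 : Finite ↥(H.map π)) (h2 : Finite ↥π.ker) : Finite ↥H := by
  have hfq : Finite (↥H ⧸ ((π.ker).subgroupOf H)) := finite_quot_subgroupOf π H h1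
  have hfk : Finite ↥((π.ker).subgroupOf H) := by
    refine Finite.of_injective (fun x : ↥((π.ker).subgroupOf H) => (⟨((x : ↥H) : Q), x.2⟩ : ↥π.ker)) ?_
    intro x y hxy
    have h1 := congrArg Subtype.val hxy
    exact Subtype.ext (Subtype.ext h1)
  exact Finite.of_equiv _ (Subgroup.groupEquivQuotientProdSubgroup (s := (π.ker).subgroupOf H)).symm

theorem eq_one_of_finite_range {Q A : Type*} [Group Q] [Group A] {Y : Set Q} (hYf : Y.Finite)
    {H : Subgroup Q} (htf : ∀ x ∈ H, IsOfFinOrder x → x = 1)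
    (ψ : A →* Q) (hr : ∀ a, ψ a ∈ Y) (hH : ∀ a, ψ a ∈ H) (a : A) : ψ a = 1 := by
  refine htf _ (hH a) ?_
  by_contra hord
  have hinj : Function.Injective (fun k : ℕ => (ψ a) ^ k) :=
    injective_pow_iff_not_isOfFinOrder.mpr hord
  have : (Set.range (fun k : ℕ => (ψ a) ^ k)).Finite := by
    refine hYf.subset ?_
    rintro _ ⟨k, rfl⟩
    show ψ a ^ k ∈ Y
    rw [← map_pow]
    exact hr (a ^ k)
  exact (Set.infinite_range_of_injective hinj) this

/-! ### the torsion-free abelian case -/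

theorem commutator_eq_bot_of_tf {Q : Type*} [Group Q] (U V : Subgroup Q)
    (hU : U.Normal) (hV : V.Normal)
    (hY : Set.Finite {x : Q | ∃ a ∈ U, ∃ b ∈ V, ⁅a, b⁆ = x})
    (hab : ∀ x ∈ (⁅U, V⁆ : Subgroup Q), ∀ y ∈ (⁅U, V⁆ : Subgroup Q), Commute x y)
    (htf : ∀ x ∈ (⁅U, V⁆ : Subgroup Q), IsOfFinOrder x → x = 1) :
    (⁅U, V⁆ : Subgroup Q) = ⊥ := by
  haveI := hU; haveI := hV
  set H : Subgroup Q := ⁅U, V⁆ with hHdef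
  have hHU : H ≤ U := Subgroup.commutator_le_left U V
  have hHV : H ≤ V := Subgroup.commutator_le_right U V
  have claimA : ∀ b ∈ V, ∀ h ∈ H, ⁅h, b⁆ = 1 := by
    intro b hb
    have hψ : ∀ h₁ h₂ : ↥H, ⁅((h₁ * h₂ : ↥H) : Q), b⁆ = ⁅(h₁ : Q), b⁆ * ⁅(h₂ : Q), b⁆ := by
      intro h₁ h₂
      have c2 : ⁅(h₂ : Q), b⁆ ∈ H := Subgroup.commutator_mem_commutator (hHU h₂.2) hb
      have c1 : ⁅(h₁ : Q), b⁆ ∈ H := Subgroup.commutator_mem_commutator (hHU h₁.2) hb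
      have e1 : ⁅(h₁ : Q) * (h₂ : Q), b⁆
          = ((h₁ : Q) * ⁅(h₂ : Q), b⁆ * (h₁ : Q)⁻¹) * ⁅(h₁ : Q), b⁆ := by group
      have e2 : (h₁ : Q) * ⁅(h₂ : Q), b⁆ * (h₁ : Q)⁻¹ = ⁅(h₂ : Q), b⁆ := by
        have := (hab _ h₁.2 _ c2).eq
        rw [this, mul_assoc, mul_inv_cancel, mul_one]
      rw [show ((h₁ * h₂ : ↥H) : Q) = (h₁ : Q) * (h₂ : Q) from rfl, e1, e2, (hab _ c2 _ c1).eq]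
    let ψ : ↥H →* Q :=
      { toFun := fun h => ⁅(h : Q), b⁆, map_one' := by simp, map_mul' := hψ }
    intro h hh
    have := eq_one_of_finite_range hY htf ψ
      (fun h' => ⟨(h' : Q), hHU h'.2, b, hb, rfl⟩)
      (fun h' => Subgroup.commutator_mem_commutator (hHU h'.2) hb) ⟨h, hh⟩
    exact this
  have claimB : ∀ a ∈ U, ∀ h ∈ H, ⁅a, h⁆ = 1 := by
    intro a ha
    have hψ : ∀ h₁ h₂ : ↥H, ⁅a, ((h₁ * h₂ : ↥H) : Q)⁆ = ⁅a, (h₁ : Q)⁆ * ⁅a, (h₂ : Q)⁆ := by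
      intro h₁ h₂
      have c2 : ⁅a, (h₂ : Q)⁆ ∈ H := Subgroup.commutator_mem_commutator ha (hHV h₂.2)
      have e1 : ⁅a, (h₁ : Q) * (h₂ : Q)⁆
          = ⁅a, (h₁ : Q)⁆ * ((h₁ : Q) * ⁅a, (h₂ : Q)⁆ * (h₁ : Q)⁻¹) := by group
      have e2 : (h₁ : Q) * ⁅a, (h₂ : Q)⁆ * (h₁ : Q)⁻¹ = ⁅a, (h₂ : Q)⁆ := by
        have := (hab _ h₁.2 _ c2).eq
        rw [this, mul_assoc, mul_inv_cancel, mul_one]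
      rw [show ((h₁ * h₂ : ↥H) : Q) = (h₁ : Q) * (h₂ : Q) from rfl, e1, e2]
    let ψ : ↥H →* Q :=
      { toFun := fun h => ⁅a, (h : Q)⁆, map_one' := by simp, map_mul' := hψ }
    intro h hh
    exact eq_one_of_finite_range hY htf ψ
      (fun h' => ⟨a, ha, (h' : Q), hHV h'.2, rfl⟩)
      (fun h' => Subgroup.commutator_mem_commutator ha (hHV h'.2)) ⟨h, hh⟩
  have main : ∀ a ∈ U, ∀ b ∈ V, ⁅a, b⁆ = 1 := by
    intro a ha b hb
    have hψ : ∀ a₁ a₂ : ↥U, ⁅((a₁ * a₂ : ↥U) : Q), b⁆ = ⁅(a₁ : Q), b⁆ * ⁅(a₂ : Q), b⁆ := by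
      intro a₁ a₂
      have c2 : ⁅(a₂ : Q), b⁆ ∈ H := Subgroup.commutator_mem_commutator a₂.2 hb
      have c1 : ⁅(a₁ : Q), b⁆ ∈ H := Subgroup.commutator_mem_commutator a₁.2 hb
      have e1 : ⁅(a₁ : Q) * (a₂ : Q), b⁆
          = ((a₁ : Q) * ⁅(a₂ : Q), b⁆ * (a₁ : Q)⁻¹) * ⁅(a₁ : Q), b⁆ := by group
      have e2 : (a₁ : Q) * ⁅(a₂ : Q), b⁆ * (a₁ : Q)⁻¹ = ⁅(a₂ : Q), b⁆ := by
        have hcm : Commute (a₁ : Q) ⁅(a₂ : Q), b⁆ :=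
          commutatorElement_eq_one_iff_commute.mp (claimB _ a₁.2 _ c2)
        rw [hcm.eq, mul_assoc, mul_inv_cancel, mul_one]
      rw [show ((a₁ * a₂ : ↥U) : Q) = (a₁ : Q) * (a₂ : Q) from rfl, e1, e2, (hab _ c2 _ c1).eq]
    let ψ : ↥U →* Q :=
      { toFun := fun a' => ⁅(a' : Q), b⁆, map_one' := by simp, map_mul' := hψ }
    exact eq_one_of_finite_range hY htf ψ
      (fun a' => ⟨(a' : Q), a'.2, b, hb, rfl⟩)
      (fun a' => Subgroup.commutator_mem_commutator a'.2 hb) ⟨a, ha⟩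
  rw [eq_bot_iff, hHdef]
  rw [Subgroup.commutator_le]
  intro g₁ h₁ g₂ h₂
  rw [Subgroup.mem_bot]
  exact main g₁ h₁ g₂ h₂

/-! ### finiteness of ⁅U,V⁆ from finiteness of the commutator set -/

theorem commutator_finite_of_finite_commSet {Q : Type*} [Group Q] (U V : Subgroup Q)
    (hU : U.Normal) (hV : V.Normal)
    (hY : Set.Finite {x : Q | ∃ a ∈ U, ∃ b ∈ V, ⁅a, b⁆ = x}) :
    Finite ↥(⁅U, V⁆ : Subgroup Q) := by
  haveI := hU; haveI := hV
  set H : Subgroup Q := ⁅U, V⁆ with hHdef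
  have hHU : H ≤ U := Subgroup.commutator_le_left U V
  have hHV : H ≤ V := Subgroup.commutator_le_right U V
  haveI hHn : H.Normal := Subgroup.commutator_normal U V
  -- commutators of the group ↥H are finite
  have hcs : (commutatorSet ↥H).Finite := by
    have hsub : (Subtype.val '' commutatorSet ↥H) ⊆ {x : Q | ∃ a ∈ U, ∃ b ∈ V, ⁅a, b⁆ = x} := by
      rintro _ ⟨_, ⟨g₁, g₂, rfl⟩, rfl⟩
      exact ⟨(g₁ : Q), hHU g₁.2, (g₂ : Q), hHV g₂.2, rfl⟩
    exact Set.Finite.of_finite_image (hY.subset hsub)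
      (Set.injOn_of_injective Subtype.val_injective)
  haveI := hcs.to_subtype
  haveI hfc : Finite ↥(_root_.commutator ↥H) := inferInstance
  set H₂ : Subgroup Q := ⁅H, H⁆ with hH₂def
  have hH₂fin : Finite ↥H₂ := by
    have heq : H₂ = (_root_.commutator ↥H).map H.subtype := by
      rw [_root_.commutator_def, Subgroup.map_commutator, ← MonoidHom.range_eq_map, H.range_subtype]
    rw [heq]
    exact finite_map_subgroup _ _ hfc
  haveI hH₂n : H₂.Normal := Subgroup.commutator_normal H H
  set π := QuotientGroup.mk' H₂ with hπdef
  have hπs : Function.Surjective π := QuotientGroup.mk'_surjective H₂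
  haveI hUbn : (U.map π).Normal := hU.map π hπs
  haveI hVbn : (V.map π).Normal := hV.map π hπs
  have hYbar : Set.Finite {x : Q ⧸ H₂ | ∃ a ∈ U.map π, ∃ b ∈ V.map π, ⁅a, b⁆ = x} := by
    refine (hY.image π).subset ?_
    rintro x ⟨a, ha, b, hb, rfl⟩
    obtain ⟨a₀, ha₀, rfl⟩ := ha
    obtain ⟨b₀, hb₀, rfl⟩ := hb
    exact ⟨⁅a₀, b₀⁆, ⟨a₀, ha₀, b₀, hb₀, rfl⟩, (map_commutatorElement π a₀ b₀).symm⟩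
  have hHbar : (⁅U.map π, V.map π⁆ : Subgroup (Q ⧸ H₂)) = H.map π :=
    (Subgroup.map_commutator U V π).symm
  have habel : ∀ x ∈ H.map π, ∀ y ∈ H.map π, Commute x y := by
    rintro _ ⟨x, hx, rfl⟩ _ ⟨y, hy, rfl⟩
    rw [← commutatorElement_eq_one_iff_commute, ← map_commutatorElement]
    rw [← MonoidHom.mem_ker, QuotientGroup.ker_mk']
    exact Subgroup.commutator_mem_commutator hx hy
  -- the torsion part of `H.map π`
  set T : Subgroup (Q ⧸ H₂) :=
    { carrier := {x | x ∈ H.map π ∧ IsOfFinOrder x},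
      one_mem' := ⟨(H.map π).one_mem, IsOfFinOrder.one⟩,
      mul_mem' := fun {x y} hx hy =>
        ⟨mul_mem hx.1 hy.1, (habel _ hx.1 _ hy.1).isOfFinOrder_mul hx.2 hy.2⟩,
      inv_mem' := fun {x} hx => ⟨inv_mem hx.1, hx.2.inv⟩ } with hTdef
  haveI hTn : T.Normal := by
    constructor
    intro x hx g
    haveI hmn : (H.map π).Normal := hHn.map π hπs
    refine ⟨hmn.conj_mem _ hx.1 g, ?_⟩
    have := (MulAut.conj g).toMonoidHom.isOfFinOrder hx.2
    simpa using this
  set ρ := QuotientGroup.mk' T with hρdef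
  have hρs : Function.Surjective ρ := QuotientGroup.mk'_surjective T
  haveI : ((U.map π).map ρ).Normal := hUbn.map ρ hρs
  haveI : ((V.map π).map ρ).Normal := hVbn.map ρ hρs
  have hbot : (⁅(U.map π).map ρ, (V.map π).map ρ⁆ : Subgroup ((Q ⧸ H₂) ⧸ T)) = ⊥ := by
    have hmapH : (⁅(U.map π).map ρ, (V.map π).map ρ⁆ : Subgroup ((Q ⧸ H₂) ⧸ T))
        = (H.map π).map ρ := by
      rw [← Subgroup.map_commutator, hHbar]
    refine commutator_eq_bot_of_tf _ _ inferInstance inferInstance ?_ ?_ ?_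
    · refine (hYbar.image ρ).subset ?_
      rintro x ⟨a, ha, b, hb, rfl⟩
      obtain ⟨a₀, ha₀, rfl⟩ := ha
      obtain ⟨b₀, hb₀, rfl⟩ := hb
      exact ⟨⁅a₀, b₀⁆, ⟨a₀, ha₀, b₀, hb₀, rfl⟩, (map_commutatorElement ρ a₀ b₀).symm⟩
    · rw [hmapH]
      rintro _ ⟨x, hx, rfl⟩ _ ⟨y, hy, rfl⟩
      exact (habel _ hx _ hy).map ρ
    · rw [hmapH]
      rintro _ ⟨y, hy, rfl⟩ hord
      rw [← MonoidHom.mem_ker, QuotientGroup.ker_mk']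
      obtain ⟨k, hk, h1⟩ := (isOfFinOrder_iff_pow_eq_one).mp hord
      have hyk : y ^ k ∈ T :=
        (QuotientGroup.eq_one_iff _).mp (by show ρ (y ^ k) = 1; rw [map_pow]; exact h1)
      have : IsOfFinOrder y := by
        obtain ⟨m, hm, h2⟩ := (isOfFinOrder_iff_pow_eq_one).mp hyk.2
        exact isOfFinOrder_iff_pow_eq_one.mpr
          ⟨k * m, Nat.mul_pos hk hm, by rw [pow_mul]; exact h2⟩
      exact ⟨hy, this⟩
  have hHT : H.map π ≤ T := by
    have h1 : (H.map π).map ρ = ⊥ := by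
      rw [← hHbar, Subgroup.map_commutator]
      exact hbot
    have h2 := (Subgroup.map_eq_bot_iff (H.map π)).mp h1
    rwa [QuotientGroup.ker_mk'] at h2
  have hfinbar : Finite ↥(H.map π) := by
    letI cg : CommGroup ↥(H.map π) :=
      { (inferInstance : Group ↥(H.map π)) with
        mul_comm := fun x y => Subtype.ext ((habel _ x.2 _ y.2).eq) }
    haveI hfg : Group.FG ↥(H.map π) := by
      rw [← hHbar, Subgroup.commutator_def]
      haveI := hYbar.to_subtype
      exact Group.closure_finite_fg _
    have htor : Monoid.IsTorsion ↥(H.map π) := by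
      intro x
      have hx : IsOfFinOrder (x : Q ⧸ H₂) := (hHT x.2).2
      obtain ⟨k, hk, h1⟩ := (isOfFinOrder_iff_pow_eq_one).mp hx
      exact isOfFinOrder_iff_pow_eq_one.mpr
        ⟨k, hk, Subtype.ext (by simpa using h1)⟩
    exact CommGroup.finite_of_fg_torsion _ htor
  exact finite_of_map_of_ker π H hfinbar
    (by rw [hπdef, QuotientGroup.ker_mk']; exact hH₂fin)

/-! ### commutator manipulation helpers -/

theorem comm_eq_imp {a a' y : G} (h : ⁅a', y⁆ = ⁅a, y⁆) :
    y * (a'⁻¹ * a) = (a'⁻¹ * a) * y := by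
  have h2 : a' * y * a'⁻¹ = a * y * a⁻¹ := by
    have h3 := congrArg (· * y) h
    simpa [commutatorElement_def, mul_assoc] using h3
  calc y * (a'⁻¹ * a) = a'⁻¹ * (a' * y * a'⁻¹) * a := by group
    _ = a'⁻¹ * (a * y * a⁻¹) * a := by rw [h2]
    _ = (a'⁻¹ * a) * y := by group

theorem comm_eq_imp' {b b' x : G} (h : ⁅x, b'⁆ = ⁅x, b⁆) :
    x * (b'⁻¹ * b) = (b'⁻¹ * b) * x := by
  have h2 : b' * x⁻¹ * b'⁻¹ = b * x⁻¹ * b⁻¹ := by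
    have h3 := congrArg (fun t => x⁻¹ * t) h
    simpa [commutatorElement_def, mul_assoc] using h3
  have h4 : x⁻¹ * (b'⁻¹ * b) = (b'⁻¹ * b) * x⁻¹ := by
    calc x⁻¹ * (b'⁻¹ * b) = b'⁻¹ * (b' * x⁻¹ * b'⁻¹) * b := by group
      _ = b'⁻¹ * (b * x⁻¹ * b⁻¹) * b := by rw [h2]
      _ = (b'⁻¹ * b) * x⁻¹ := by group
  have h5 : Commute x⁻¹ (b'⁻¹ * b) := h4
  simpa using h5.inv_left.eq

theorem conj_comm_eq {su sv : Set G} {a a₁ b b₁ : G}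
    (hc : a⁻¹ * a₁ ∈ Subgroup.centralizer sv) (hd : b⁻¹ * b₁ ∈ Subgroup.centralizer su)
    (hb₁V : b₁ ∈ Subgroup.closure sv) (haU : a ∈ Subgroup.closure su) :
    ⁅a₁, b₁⁆ = ⁅a, b⁆ := by
  set c := a⁻¹ * a₁ with hcdef
  set d := b⁻¹ * b₁ with hddef
  have ha₁ : a₁ = a * c := by rw [hcdef]; group
  have hb₁ : b₁ = b * d := by rw [hddef]; group
  have hcb₁ : b₁ * c = c * b₁ := commute_of_mem_centralizer hc hb₁V
  have hda : a * d = d * a := commute_of_mem_centralizer hd haU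
  have e1 : ⁅a₁, b₁⁆ = a * (c * b₁) * (c⁻¹ * a⁻¹ * b₁⁻¹) := by
    rw [commutatorElement_def, ha₁]; group
  rw [e1, ← hcb₁]
  have e2 : a * (b₁ * c) * (c⁻¹ * a⁻¹ * b₁⁻¹) = a * b₁ * a⁻¹ * b₁⁻¹ := by group
  rw [e2, hb₁]
  have hda' : d * a⁻¹ = a⁻¹ * d := (Commute.inv_right (Commute.symm hda)).eq
  have e3 : a * (b * d) * a⁻¹ * (b * d)⁻¹ = a * b * (d * a⁻¹) * d⁻¹ * b⁻¹ := by group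
  rw [e3, hda']
  rw [commutatorElement_def]
  group

/-! ### the key algebraic theorem: finiteness of the verbal subgroup -/

theorem wVerbal_finite : ∀ {k : ℕ} (w : MultilinearCommutatorWord k) (Q : Type u) [Group Q]
    (N : Subgroup Q), N.Normal → N.FiniteIndex → ((N : Set Q) ⊆ marginal w) →
    Finite ↥(wVerbal w Q) := by
  intro k w
  induction w with
  | var =>
    intro Q _ N hn hfi hm
    have hN1 : ∀ s ∈ N, s = 1 := by
      intro s hs
      have h := ((hm hs) (fun _ => (1 : Q)) 0).1
      simpa [MultilinearCommutatorWord.eval] using h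
    have hbot : N = ⊥ := by
      rw [eq_bot_iff]; intro s hs; rw [Subgroup.mem_bot]; exact hN1 s hs
    have hQfin : Finite (Q ⧸ N) := (Nat.card_ne_zero.mp hfi.index_ne_zero).2
    rw [hbot] at hQfin
    have hQ : Finite Q := Finite.of_equiv _ (QuotientGroup.quotientBot (G := Q)).toEquiv
    infer_instance
  | comm u v ihu ihv =>
    intro Q _ N hn hfi hm
    set C : Subgroup Q := Subgroup.centralizer (wValues v Q) with hCdef
    set D : Subgroup Q := Subgroup.centralizer (wValues u Q) with hDdef
    have hCn : C.Normal := centralizer_normal_of (fun c x hx => wValues_conj v c x hx)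
    have hDn : D.Normal := centralizer_normal_of (fun c x hx => wValues_conj u c x hx)
    -- deviations of u lie in C
    have hdevC : ∀ s ∈ N, ∀ (g : Fin _ → Q) (i : Fin _),
        ((u.eval (Function.update g i (s * g i)))⁻¹ * u.eval g ∈ C) ∧
        ((u.eval (Function.update g i (g i * s)))⁻¹ * u.eval g ∈ C) := by
      intro s hs g i
      constructor
      · rw [Subgroup.mem_centralizer_iff]
        rintro y ⟨h, rfl⟩
        have hkey := ((hm hs) (Fin.addCases (motive := fun _ => Q) g h) (Fin.castAdd _ i)).1
        rw [show (Fin.addCases (motive := fun _ => Q) g h) (Fin.castAdd _ i) = g i by simp] at hkey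
        rw [update_addCases_left, eval_comm_addCases, eval_comm_addCases] at hkey
        exact comm_eq_imp hkey
      · rw [Subgroup.mem_centralizer_iff]
        rintro y ⟨h, rfl⟩
        have hkey := ((hm hs) (Fin.addCases (motive := fun _ => Q) g h) (Fin.castAdd _ i)).2
        rw [show (Fin.addCases (motive := fun _ => Q) g h) (Fin.castAdd _ i) = g i by simp] at hkey
        rw [update_addCases_left, eval_comm_addCases, eval_comm_addCases] at hkey
        exact comm_eq_imp hkey
    -- deviations of v lie in D
    have hdevD : ∀ s ∈ N, ∀ (h : Fin _ → Q) (j : Fin _),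
        ((v.eval (Function.update h j (s * h j)))⁻¹ * v.eval h ∈ D) ∧
        ((v.eval (Function.update h j (h j * s)))⁻¹ * v.eval h ∈ D) := by
      intro s hs h j
      constructor
      · rw [Subgroup.mem_centralizer_iff]
        rintro y ⟨g, rfl⟩
        have hkey := ((hm hs) (Fin.addCases (motive := fun _ => Q) g h) (Fin.natAdd _ j)).1
        rw [show (Fin.addCases (motive := fun _ => Q) g h) (Fin.natAdd _ j) = h j by simp] at hkey
        rw [update_addCases_right, eval_comm_addCases, eval_comm_addCases] at hkey
        exact comm_eq_imp' hkey
      · rw [Subgroup.mem_centralizer_iff]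
        rintro y ⟨g, rfl⟩
        have hkey := ((hm hs) (Fin.addCases (motive := fun _ => Q) g h) (Fin.natAdd _ j)).2
        rw [show (Fin.addCases (motive := fun _ => Q) g h) (Fin.natAdd _ j) = h j by simp] at hkey
        rw [update_addCases_right, eval_comm_addCases, eval_comm_addCases] at hkey
        exact comm_eq_imp' hkey
    haveI := hCn
    haveI := hDn
    -- quotient data for C
    have hn1 : (N.map (QuotientGroup.mk' C)).Normal := hn.map _ (QuotientGroup.mk'_surjective C)
    have hfi1 : (N.map (QuotientGroup.mk' C)).FiniteIndex := by
      constructor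
      intro h0
      have h1 : ((N.map (QuotientGroup.mk' C)).comap (QuotientGroup.mk' C)).index
          = (N.map (QuotientGroup.mk' C)).index :=
        Subgroup.index_comap_of_surjective _ (QuotientGroup.mk'_surjective C)
      have h2 : N ≤ (N.map (QuotientGroup.mk' C)).comap (QuotientGroup.mk' C) :=
        fun x hx => Subgroup.mem_comap.mpr (Subgroup.mem_map_of_mem _ hx)
      have h3 := Subgroup.index_dvd_of_le h2
      rw [h1, h0] at h3
      exact hfi.index_ne_zero (zero_dvd_iff.mp h3)
    have hm1 : ((N.map (QuotientGroup.mk' C) : Subgroup (Q ⧸ C)) : Set (Q ⧸ C)) ⊆ marginal u := by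
      rintro x ⟨s, hs, rfl⟩
      show (QuotientGroup.mk s : Q ⧸ C) ∈ marginal u
      rw [mk_mem_marginal_iff]
      exact fun g i => hdevC s hs g i
    have hufin : Finite ↥(wVerbal u (Q ⧸ C)) := ihu (Q ⧸ C) (N.map _) hn1 hfi1 hm1
    -- quotient data for D
    have hn2 : (N.map (QuotientGroup.mk' D)).Normal := hn.map _ (QuotientGroup.mk'_surjective D)
    have hfi2 : (N.map (QuotientGroup.mk' D)).FiniteIndex := by
      constructor
      intro h0
      have h1 : ((N.map (QuotientGroup.mk' D)).comap (QuotientGroup.mk' D)).index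
          = (N.map (QuotientGroup.mk' D)).index :=
        Subgroup.index_comap_of_surjective _ (QuotientGroup.mk'_surjective D)
      have h2 : N ≤ (N.map (QuotientGroup.mk' D)).comap (QuotientGroup.mk' D) :=
        fun x hx => Subgroup.mem_comap.mpr (Subgroup.mem_map_of_mem _ hx)
      have h3 := Subgroup.index_dvd_of_le h2
      rw [h1, h0] at h3
      exact hfi.index_ne_zero (zero_dvd_iff.mp h3)
    have hm2 : ((N.map (QuotientGroup.mk' D) : Subgroup (Q ⧸ D)) : Set (Q ⧸ D)) ⊆ marginal v := by
      rintro x ⟨s, hs, rfl⟩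
      show (QuotientGroup.mk s : Q ⧸ D) ∈ marginal v
      rw [mk_mem_marginal_iff]
      exact fun g i => hdevD s hs g i
    have hvfin : Finite ↥(wVerbal v (Q ⧸ D)) := ihv (Q ⧸ D) (N.map _) hn2 hfi2 hm2
    -- finite coset spaces
    set U : Subgroup Q := wVerbal u Q with hUdef
    set Vv : Subgroup Q := wVerbal v Q with hVvdef
    have hUn : U.Normal := wVerbal_normal u
    have hVn : Vv.Normal := wVerbal_normal v
    have hQCfin : Finite (↥U ⧸ C.subgroupOf U) := by
      have hmap : Finite ↥(U.map (QuotientGroup.mk' C)) := by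
        rw [hUdef, wVerbal_map_surj (QuotientGroup.mk'_surjective C) u]
        exact hufin
      have := finite_quot_subgroupOf (QuotientGroup.mk' C) U hmap
      rwa [QuotientGroup.ker_mk'] at this
    have hQDfin : Finite (↥Vv ⧸ D.subgroupOf Vv) := by
      have hmap : Finite ↥(Vv.map (QuotientGroup.mk' D)) := by
        rw [hVvdef, wVerbal_map_surj (QuotientGroup.mk'_surjective D) v]
        exact hvfin
      have := finite_quot_subgroupOf (QuotientGroup.mk' D) Vv hmap
      rwa [QuotientGroup.ker_mk'] at this
    -- the set of commutators of U and Vv is finite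
    have hYfin : Set.Finite {x : Q | ∃ a ∈ U, ∃ b ∈ Vv, ⁅a, b⁆ = x} := by
      haveI := hQCfin; haveI := hQDfin
      refine (Set.finite_range (fun p : (↥U ⧸ C.subgroupOf U) × (↥Vv ⧸ D.subgroupOf Vv) =>
        ⁅((p.1.out : ↥U) : Q), ((p.2.out : ↥Vv) : Q)⁆)).subset ?_
      rintro x ⟨a, ha, b, hb, rfl⟩
      refine ⟨(QuotientGroup.mk (⟨a, ha⟩ : ↥U), QuotientGroup.mk (⟨b, hb⟩ : ↥Vv)), ?_⟩
      beta_reduce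
      set a₁ : ↥U := (QuotientGroup.mk (⟨a, ha⟩ : ↥U) : ↥U ⧸ C.subgroupOf U).out with ha₁def
      set b₁ : ↥Vv := (QuotientGroup.mk (⟨b, hb⟩ : ↥Vv) : ↥Vv ⧸ D.subgroupOf Vv).out with hb₁def
      have h1 : (QuotientGroup.mk (⟨a, ha⟩ : ↥U) : ↥U ⧸ C.subgroupOf U)
          = QuotientGroup.mk a₁ := (QuotientGroup.out_eq' _).symm
      have h1' : (⟨a, ha⟩ : ↥U)⁻¹ * a₁ ∈ C.subgroupOf U := QuotientGroup.eq.mp h1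
      have h2 : (QuotientGroup.mk (⟨b, hb⟩ : ↥Vv) : ↥Vv ⧸ D.subgroupOf Vv)
          = QuotientGroup.mk b₁ := (QuotientGroup.out_eq' _).symm
      have h2' : (⟨b, hb⟩ : ↥Vv)⁻¹ * b₁ ∈ D.subgroupOf Vv := QuotientGroup.eq.mp h2
      rw [Subgroup.mem_subgroupOf] at h1' h2'
      exact conj_comm_eq (su := wValues u Q) (sv := wValues v Q) h1' h2' b₁.2 ha
    have hUVfin : Finite ↥(⁅U, Vv⁆ : Subgroup Q) :=
      commutator_finite_of_finite_commSet U Vv hUn hVn hYfin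
    have hle : wVerbal (u.comm v) Q ≤ ⁅U, Vv⁆ := by
      rw [wVerbal, Subgroup.closure_le]
      rintro x ⟨f, rfl⟩
      show (u.comm v).eval f ∈ (⁅U, Vv⁆ : Subgroup Q)
      have heq : (u.comm v).eval f = ⁅u.eval (fun i => f (Fin.castAdd _ i)),
          v.eval (fun j => f (Fin.natAdd _ j))⁆ := rfl
      rw [heq]
      exact Subgroup.commutator_mem_commutator
        (Subgroup.subset_closure ⟨_, rfl⟩) (Subgroup.subset_closure ⟨_, rfl⟩)
    exact Finite.of_injective (Subgroup.inclusion hle) (Subgroup.inclusion_injective hle)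

end MCWAux

/-- The `w*`-residual of a subset `S` of a topological group `G`: the intersection of all
closed normal subgroups `N` of `G` such that the image of `S` in `G ⧸ N` is contained in
the marginal subgroup `w*(G ⧸ N)`. -/
def wStarResidual {G : Type*} [Group G] [TopologicalSpace G] {n : ℕ}
    (w : MultilinearCommutatorWord n) (S : Set G) : Subgroup G :=
  sInf {N : Subgroup G | IsClosed (N : Set G) ∧ ∃ hN : N.Normal,
    letI := hN
    ∀ s ∈ S, (QuotientGroup.mk s : G ⧸ N) ∈ marginal w}

open MCWAux

/-- Let `w` be a multilinear commutator word, `G` a profinite group and `N` an open normal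
subgroup of `G`. Then the `w*`-residual of `N` is an open subgroup of the verbal subgroup
`w(G)`: it is a closed subgroup of `w(G)` of finite index. -/
theorem wStarResidual_open_in_verbal {G : Type*} [Group G] [TopologicalSpace G]
    [IsTopologicalGroup G] [CompactSpace G] [T2Space G] [TotallyDisconnectedSpace G]
    {n : ℕ} (w : MultilinearCommutatorWord n)
    (N : Subgroup G) (hNn : N.Normal) (hNo : IsOpen (N : Set G)) :
    wStarResidual w (N : Set G) ≤
        (Subgroup.closure {g : G | ∃ f : Fin n → G, w.eval f = g}).topologicalClosure ∧
      IsClosed ((wStarResidual w (N : Set G) : Set G)) ∧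
      (wStarResidual w (N : Set G)).relIndex
        (Subgroup.closure {g : G | ∃ f : Fin n → G, w.eval f = g}).topologicalClosure ≠ 0 := by
  classical
  haveI := hNn
  set Wv : Subgroup G := Subgroup.closure {g : G | ∃ f : Fin n → G, w.eval f = g} with hWdef
  set V : Subgroup G := Wv.topologicalClosure with hVdef
  haveI hWnorm : Wv.Normal := wVerbal_normal w
  haveI hVnorm : V.Normal := Subgroup.is_normal_topologicalClosure Wv
  have hVclosed : IsClosed (V : Set G) := Subgroup.isClosed_topologicalClosure Wv
  set Dev : Set G := {d : G | ∃ s ∈ N, ∃ (g : Fin n → G) (i : Fin n),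
      d = (w.eval (Function.update g i (s * g i)))⁻¹ * w.eval g ∨
      d = (w.eval (Function.update g i (g i * s)))⁻¹ * w.eval g} with hDevdef
  set M₀ : Subgroup G := (Subgroup.normalClosure Dev).topologicalClosure with hM₀def
  haveI : (Subgroup.normalClosure Dev).Normal := Subgroup.normalClosure_normal
  haveI hM₀n : M₀.Normal := Subgroup.is_normal_topologicalClosure _
  have hM₀closed : IsClosed (M₀ : Set G) := Subgroup.isClosed_topologicalClosure _
  have hDevW : Dev ⊆ (Wv : Set G) := by
    rintro d ⟨s, hs, g, i, (rfl | rfl)⟩ <;>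
      exact mul_mem (inv_mem (Subgroup.subset_closure ⟨_, rfl⟩)) (Subgroup.subset_closure ⟨_, rfl⟩)
  have hM₀V : M₀ ≤ V := by
    apply Subgroup.topologicalClosure_minimal _ _ hVclosed
    apply Subgroup.normalClosure_le_normal
    exact fun d hd => Subgroup.le_topologicalClosure Wv (hDevW hd)
  have hDevM₀ : Dev ⊆ (M₀ : Set G) :=
    fun d hd => Subgroup.le_topologicalClosure _ (Subgroup.subset_normalClosure hd)
  have hM₀mem : M₀ ∈ {K : Subgroup G | IsClosed (K : Set G) ∧ ∃ hK : K.Normal,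
      letI := hK
      ∀ s ∈ (N : Set G), (QuotientGroup.mk s : G ⧸ K) ∈ marginal w} := by
    refine ⟨hM₀closed, hM₀n, ?_⟩
    intro s hs
    rw [mk_mem_marginal_iff]
    intro g i
    exact ⟨hDevM₀ ⟨s, hs, g, i, Or.inl rfl⟩, hDevM₀ ⟨s, hs, g, i, Or.inr rfl⟩⟩
  have hres : wStarResidual w (N : Set G) = M₀ := by
    apply le_antisymm
    · exact sInf_le hM₀mem
    · apply le_sInf
      rintro K ⟨hKc, hKn, hKm⟩
      haveI := hKn
      apply Subgroup.topologicalClosure_minimal _ _ hKc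
      apply Subgroup.normalClosure_le_normal
      rintro d ⟨s, hs, g, i, hd⟩
      have hK := (mk_mem_marginal_iff w s).mp (hKm s hs) g i
      rcases hd with rfl | rfl
      · exact hK.1
      · exact hK.2
  refine ⟨?_, ?_, ?_⟩
  · rw [hres]; exact hM₀V
  · rw [hres]; exact hM₀closed
  · rw [hres]
    haveI : IsClosed ((M₀ : Subgroup G) : Set G) := hM₀closed
    haveI : T3Space (G ⧸ M₀) := inferInstance
    have hNfin : Finite (G ⧸ N) := N.quotient_finite_of_isOpen hNo
    haveI := hNfin
    have hNfi : N.FiniteIndex := ⟨Subgroup.index_ne_zero_of_finite⟩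
    have hn' : (N.map (QuotientGroup.mk' M₀)).Normal :=
      hNn.map _ (QuotientGroup.mk'_surjective _)
    have hfi' : (N.map (QuotientGroup.mk' M₀)).FiniteIndex := by
      constructor
      intro h0
      have h1 : ((N.map (QuotientGroup.mk' M₀)).comap (QuotientGroup.mk' M₀)).index
          = (N.map (QuotientGroup.mk' M₀)).index :=
        Subgroup.index_comap_of_surjective _ (QuotientGroup.mk'_surjective M₀)
      have h2 : N ≤ (N.map (QuotientGroup.mk' M₀)).comap (QuotientGroup.mk' M₀) :=
        fun x hx => Subgroup.mem_comap.mpr (Subgroup.mem_map_of_mem _ hx)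
      have h3 := Subgroup.index_dvd_of_le h2
      rw [h1, h0] at h3
      exact hNfi.index_ne_zero (zero_dvd_iff.mp h3)
    have hm' : ((N.map (QuotientGroup.mk' M₀)) : Set (G ⧸ M₀)) ⊆ marginal w := by
      rintro x ⟨s, hs, rfl⟩
      show (QuotientGroup.mk s : G ⧸ M₀) ∈ marginal w
      exact hM₀mem.2.choose_spec s hs
    have hWfin : Finite ↥(wVerbal w (G ⧸ M₀)) :=
      wVerbal_finite w (G ⧸ M₀) (N.map _) hn' hfi' hm'
    haveI : Finite ↥((wVerbal w (G ⧸ M₀) : Set (G ⧸ M₀))) := hWfin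
    have himg : ((QuotientGroup.mk' M₀) '' (V : Set G)).Finite := by
      have h1 : (QuotientGroup.mk' M₀) '' (V : Set G)
          ⊆ closure ((QuotientGroup.mk' M₀) '' (Wv : Set G)) := by
        rw [hVdef, Subgroup.topologicalClosure_coe]
        exact image_closure_subset_closure_image QuotientGroup.continuous_mk
      have h2 : closure ((QuotientGroup.mk' M₀) '' (Wv : Set G))
          ⊆ (wVerbal w (G ⧸ M₀) : Set (G ⧸ M₀)) := by
        apply closure_minimal
        · have hle : Wv.map (QuotientGroup.mk' M₀) ≤ wVerbal w (G ⧸ M₀) :=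
            wVerbal_map_le _ w
          intro y hy
          obtain ⟨x, hx, rfl⟩ := hy
          exact hle (Subgroup.mem_map_of_mem _ hx)
        · exact (Set.toFinite _).isClosed
      exact (Set.toFinite ((wVerbal w (G ⧸ M₀) : Set (G ⧸ M₀)))).subset (h1.trans h2)
    have hfinq : Finite (↥V ⧸ M₀.subgroupOf V) := by
      have hmapfin : Finite ↥(V.map (QuotientGroup.mk' M₀)) := by
        have hmf : ((V.map (QuotientGroup.mk' M₀)) : Set (G ⧸ M₀)).Finite := by
          rw [Subgroup.coe_map]; exact himg
        exact hmf.to_subtype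
      have := finite_quot_subgroupOf (QuotientGroup.mk' M₀) V hmapfin
      rwa [QuotientGroup.ker_mk'] at this
    haveI := hfinq
    show (M₀.subgroupOf V).index ≠ 0
    exact Subgroup.index_ne_zero_of_finite
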